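/- Let G be a finitely generated group with finitely generated center and let φ be an automorphism of G of finite order. Then Fix φ is finitely generated if and only if Fix φ̄ is finitely generated. (Case n = 1 of Corollary B.) -/

import Mathlib

open scoped IsMulCommutative

/-- The subgroup of fixed points of an automorphism `φ` of `G`:
`Fix φ = {g ∈ G | φ(g) = g}`. -/
def fixedSubgroup {G : Type*} [Group G] (φ : G ≃* G) : Subgroup G where
  carrier := {g | φ g = g}
  one_mem' := map_one φ
  mul_mem' := by
    intro a b ha hb
    simp only [Set.mem_setOf_eq, map_mul] at *
    rw [ha, hb]
  inv_mem' := by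
    intro a ha
    simp only [Set.mem_setOf_eq, map_inv] at *
    rw [ha]


lemma aux_subgroup_fg_of_comm {A : Type*} [CommGroup A] (hA : Group.FG A) (B : Subgroup A) :
    Group.FG ↥B := by
  rw [Group.fg_iff_subgroup_fg, Subgroup.fg_iff_add_fg]
  haveI : Module.Finite ℤ (Additive A) :=
    Module.Finite.iff_addGroup_fg.mpr (GroupFG.iff_add_fg.mp hA)
  have h := IsNoetherian.noetherian (AddSubgroup.toIntSubmodule B.toAddSubgroup)
  rwa [Submodule.fg_iff_addSubgroup_fg, AddSubgroup.toIntSubmodule_toAddSubgroup] at h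

lemma aux_fg_of_ker_of_surjective {G₁ G₂ : Type*} [Group G₁] [Group G₂] (f : G₁ →* G₂)
    (hf : Function.Surjective f) (hker : f.ker.FG) (h2 : Group.FG G₂) : Group.FG G₁ := by
  obtain ⟨T, hT, hTfin⟩ := Group.fg_iff.mp h2
  obtain ⟨K, hK⟩ := hker
  set s : G₂ → G₁ := Function.surjInv hf with hs
  rw [Group.fg_iff]
  refine ⟨s '' T ∪ ↑K, ?_, (hTfin.image s).union K.finite_toSet⟩
  rw [eq_top_iff]
  intro g _
  have h1 : ∀ x ∈ Subgroup.closure T, ∃ y ∈ Subgroup.closure (s '' T ∪ ↑K), f y = x := by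
    intro x hx
    induction hx using Subgroup.closure_induction with
    | mem t ht =>
        exact ⟨s t, Subgroup.subset_closure (Or.inl ⟨t, ht, rfl⟩), Function.surjInv_eq hf t⟩
    | one => exact ⟨1, one_mem _, map_one f⟩
    | mul a b _ _ ha hb =>
        obtain ⟨y, hy, hfy⟩ := ha; obtain ⟨z, hz, hfz⟩ := hb
        exact ⟨y * z, mul_mem hy hz, by rw [map_mul, hfy, hfz]⟩
    | inv a _ ha =>
        obtain ⟨y, hy, hfy⟩ := ha
        exact ⟨y⁻¹, inv_mem hy, by rw [map_inv, hfy]⟩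
  obtain ⟨y, hy, hfy⟩ := h1 (f g) (by rw [hT]; trivial)
  have hk : g * y⁻¹ ∈ f.ker := by
    rw [MonoidHom.mem_ker, map_mul, map_inv, hfy, mul_inv_cancel]
  have hk2 : g * y⁻¹ ∈ Subgroup.closure (s '' T ∪ ↑K) := by
    rw [← hK] at hk
    exact Subgroup.closure_mono Set.subset_union_right hk
  have := mul_mem hk2 hy
  rwa [inv_mul_cancel_right] at this

lemma aux_fg_of_finiteIndex_subgroup {A : Type*} [Group A] (S : Subgroup A)
    (hS : Group.FG ↥S) (hidx : S.index ≠ 0) : Group.FG A := by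
  haveI : Finite (A ⧸ S) := by
    rw [Subgroup.index] at hidx
    exact (Nat.card_ne_zero.mp hidx).2
  obtain ⟨T, hT, hTfin⟩ := Group.fg_iff.mp hS
  rw [Group.fg_iff]
  set R : Set A := Set.range (fun q : A ⧸ S => (Quotient.out q : A)) with hR
  refine ⟨(Subtype.val '' T) ∪ R, ?_, (hTfin.image _).union (Set.finite_range _)⟩
  rw [eq_top_iff]
  intro g _
  have hSle : (S : Set A) ⊆ (Subgroup.closure (Subtype.val '' T) : Set A) := by
    have : S.subtype.range = S := S.range_subtype
    have h2 : Subgroup.closure (Subtype.val '' T) = Subgroup.map S.subtype (Subgroup.closure T) := by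
      rw [MonoidHom.map_closure]; rfl
    rw [h2, hT]
    intro x hx
    exact ⟨⟨x, hx⟩, trivial, rfl⟩
  set r : A := Quotient.out (QuotientGroup.mk g : A ⧸ S) with hr
  have hrg : r⁻¹ * g ∈ S := by
    rw [← QuotientGroup.eq]
    exact Quotient.out_eq _
  have h1 : r ∈ Subgroup.closure ((Subtype.val '' T) ∪ R) :=
    Subgroup.subset_closure (Or.inr ⟨QuotientGroup.mk g, rfl⟩)
  have h2 : r⁻¹ * g ∈ Subgroup.closure ((Subtype.val '' T) ∪ R) :=
    Subgroup.closure_mono Set.subset_union_left (hSle hrg)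
  have := mul_mem h1 h2
  rwa [mul_inv_cancel_left] at this

lemma mem_fixedSubgroup_iff {G : Type*} [Group G] (φ : G ≃* G) {g : G} :
    g ∈ fixedSubgroup φ ↔ φ g = g := Iff.rfl

section Main
variable {G : Type*} [Group G] (φ : G ≃* G)
    (φbar : (G ⧸ Subgroup.center G) ≃* (G ⧸ Subgroup.center G))
    (hbar : ∀ g : G, φbar (QuotientGroup.mk g) = QuotientGroup.mk (φ g))

lemma hphiZ : ∀ z : G, z ∈ Subgroup.center G → φ z ∈ Subgroup.center G := by
  intro z hz
  rw [Subgroup.mem_center_iff] at hz ⊢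
  intro g
  have := congrArg φ (hz (φ.symm g))
  simpa [map_mul] using this

noncomputable abbrev phiZ : ↥(Subgroup.center G) →* ↥(Subgroup.center G) :=
  (φ.toMonoidHom.domRestrict (Subgroup.center G)).codRestrict _ (fun z => hphiZ φ z z.2)

example (z : ↥(Subgroup.center G)) : ((phiZ φ z : ↥(Subgroup.center G)) : G) = φ z := rfl

noncomputable def nu : ↥(Subgroup.center G) →* ↥(Subgroup.center G) where
  toFun := fun z => z⁻¹ * phiZ φ z
  map_one' := by simp
  map_mul' := by
    intro a b
    simp only [map_mul, mul_inv_rev]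
    rw [mul_comm b⁻¹ a⁻¹, mul_mul_mul_comm]

lemma memH (hbar : ∀ g : G, φbar (QuotientGroup.mk g) = QuotientGroup.mk (φ g)) (g : G) :
    g ∈ (fixedSubgroup φbar).comap (QuotientGroup.mk' (Subgroup.center G)) ↔
      g⁻¹ * φ g ∈ Subgroup.center G := by
  rw [Subgroup.mem_comap, mem_fixedSubgroup_iff]
  show φbar (QuotientGroup.mk g) = QuotientGroup.mk g ↔ _
  rw [hbar, QuotientGroup.eq]
  rw [show g⁻¹ * φ g = ((φ g)⁻¹ * g)⁻¹ by group, Subgroup.inv_mem_iff]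


noncomputable def dHom (hbar : ∀ g : G, φbar (QuotientGroup.mk g) = QuotientGroup.mk (φ g)) :
    ↥((fixedSubgroup φbar).comap (QuotientGroup.mk' (Subgroup.center G))) →*
      ↥(Subgroup.center G) where
  toFun g := ⟨(g : G)⁻¹ * φ g, (memH φ φbar hbar (g : G)).mp g.2⟩
  map_one' := by ext; simp
  map_mul' := by
    intro a b
    have hza := (memH φ φbar hbar (a : G)).mp a.2
    rw [Subgroup.mem_center_iff] at hza
    ext
    simp only [Subgroup.coe_mul, MulMemClass.mk_mul_mk, mul_inv_rev, map_mul]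
    calc ((b : G))⁻¹ * (a : G)⁻¹ * (φ a * φ b)
        = ((b : G))⁻¹ * ((a : G)⁻¹ * φ a) * φ b := by group
      _ = ((a : G)⁻¹ * φ a) * ((b : G))⁻¹ * φ b := by rw [hza]
      _ = _ := by group


lemma claimA (hbar : ∀ g : G, φbar (QuotientGroup.mk g) = QuotientGroup.mk (φ g))
    (g : ↥((fixedSubgroup φbar).comap (QuotientGroup.mk' (Subgroup.center G)))) (k : ℕ) :
    (⇑φ)^[k] (g : G) =
      (g : G) * ↑(∏ i ∈ Finset.range k, (⇑(phiZ φ))^[i] (dHom φ φbar hbar g)) := by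
  set z := dHom φ φbar hbar g with hz
  have hw : ∀ k : ℕ, z * (phiZ φ) (∏ i ∈ Finset.range k, (⇑(phiZ φ))^[i] z) =
      ∏ i ∈ Finset.range (k + 1), (⇑(phiZ φ))^[i] z := by
    intro k
    rw [Finset.prod_range_succ', map_prod, mul_comm]
    simp [Function.iterate_succ_apply']
  induction k with
  | zero => simp
  | succ k ih =>
      rw [Function.iterate_succ_apply', ih, map_mul]
      have h1 : φ ((∏ i ∈ Finset.range k, (⇑(phiZ φ))^[i] z : ↥(Subgroup.center G)) : G) =
          ((phiZ φ) (∏ i ∈ Finset.range k, (⇑(phiZ φ))^[i] z) : G) := rfl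
      have h2 : φ (g : G) = (g : G) * (z : G) := by
        show _ = (g : G) * ((g : G)⁻¹ * φ (g : G))
        group
      rw [h1, h2, ← hw k]
      push_cast
      group

lemma claimB (z : ↥(Subgroup.center G)) (i : ℕ) :
    z⁻¹ * (⇑(phiZ φ))^[i] z ∈ (nu φ).range := by
  induction i with
  | zero =>
      simp only [Function.iterate_zero, id_eq, inv_mul_cancel]
      exact one_mem _
  | succ i ih =>
      have : z⁻¹ * (⇑(phiZ φ))^[i+1] z =
          (z⁻¹ * (⇑(phiZ φ))^[i] z) * nu φ ((⇑(phiZ φ))^[i] z) := by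
        show _ = _ * (((⇑(phiZ φ))^[i] z)⁻¹ * phiZ φ ((⇑(phiZ φ))^[i] z))
        rw [Function.iterate_succ_apply']
        group
      rw [this]
      exact mul_mem ih ⟨_, rfl⟩

lemma claimC (hbar : ∀ g : G, φbar (QuotientGroup.mk g) = QuotientGroup.mk (φ g))
    (m : ℕ) (hord : ∀ g : G, (⇑φ)^[m] g = g)
    (g : ↥((fixedSubgroup φbar).comap (QuotientGroup.mk' (Subgroup.center G)))) :
    (dHom φ φbar hbar g) ^ m ∈ (nu φ).range := by
  set z := dHom φ φbar hbar g with hz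
  have hwm : (∏ i ∈ Finset.range m, (⇑(phiZ φ))^[i] z) = 1 := by
    have hA := claimA φ φbar hbar g m
    rw [hord (g : G)] at hA
    have h1 : ((∏ i ∈ Finset.range m, (⇑(phiZ φ))^[i] z : ↥(Subgroup.center G)) : G) = 1 :=
      left_eq_mul.mp hA
    exact_mod_cast h1
  have key : z ^ m = (∏ i ∈ Finset.range m, (z * ((⇑(phiZ φ))^[i] z)⁻¹)) *
      (∏ i ∈ Finset.range m, (⇑(phiZ φ))^[i] z) := by
    rw [Finset.prod_mul_distrib, Finset.prod_const, Finset.card_range, mul_assoc,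
      ← Finset.prod_mul_distrib]
    simp
  rw [key, hwm, mul_one]
  exact prod_mem (fun i _ => by
    have := inv_mem (claimB φ z i)
    simpa [mul_inv_rev, mul_comm] using this)


noncomputable def eHom (hbar : ∀ g : G, φbar (QuotientGroup.mk g) = QuotientGroup.mk (φ g)) :
    ↥((fixedSubgroup φbar).comap (QuotientGroup.mk' (Subgroup.center G))) →*
      (↥(Subgroup.center G) ⧸ (nu φ).range) :=
  (QuotientGroup.mk' (nu φ).range).comp (dHom φ φbar hbar)

lemma F_le_H (hbar : ∀ g : G, φbar (QuotientGroup.mk g) = QuotientGroup.mk (φ g)) :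
    fixedSubgroup φ ≤ (fixedSubgroup φbar).comap (QuotientGroup.mk' (Subgroup.center G)) := by
  intro g hg
  rw [memH φ φbar hbar, hg]
  simpa using one_mem (Subgroup.center G)

lemma Z_le_H (hbar : ∀ g : G, φbar (QuotientGroup.mk g) = QuotientGroup.mk (φ g)) :
    Subgroup.center G ≤ (fixedSubgroup φbar).comap (QuotientGroup.mk' (Subgroup.center G)) := by
  intro z hz
  rw [memH φ φbar hbar]
  exact mul_mem (inv_mem hz) (hphiZ φ z hz)

lemma ker_eHom_map (hbar : ∀ g : G, φbar (QuotientGroup.mk g) = QuotientGroup.mk (φ g)) :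
    (eHom φ φbar hbar).ker.map
        ((fixedSubgroup φbar).comap (QuotientGroup.mk' (Subgroup.center G))).subtype =
      fixedSubgroup φ ⊔ Subgroup.center G := by
  apply le_antisymm
  · intro x hx
    rw [Subgroup.mem_map] at hx
    obtain ⟨g, hg, rfl⟩ := hx
    rw [MonoidHom.mem_ker] at hg
    have hd : dHom φ φbar hbar g ∈ (nu φ).range := (QuotientGroup.eq_one_iff _).mp hg
    obtain ⟨y, hy⟩ := hd
    have hcoe : (y : G)⁻¹ * φ (y : G) = (g : G)⁻¹ * φ (g : G) := congrArg Subtype.val hy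
    have ha : (g : G) * (y : G)⁻¹ ∈ fixedSubgroup φ := by
      show φ ((g : G) * (y : G)⁻¹) = (g : G) * (y : G)⁻¹
      have hφg : φ (g : G) = (g : G) * ((y : G)⁻¹ * φ (y : G)) := by rw [hcoe]; group
      rw [map_mul, map_inv, hφg]
      group
    have hgy : ((fixedSubgroup φbar).comap
        (QuotientGroup.mk' (Subgroup.center G))).subtype g = ((g : G) * (y : G)⁻¹) * (y : G) := by
      show (g : G) = ((g : G) * (y : G)⁻¹) * (y : G)
      group
    rw [hgy]
    exact mul_mem (Subgroup.mem_sup_left ha) (Subgroup.mem_sup_right y.2)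
  · rw [sup_le_iff]
    constructor
    · intro g hg
      refine Subgroup.mem_map.mpr ⟨⟨g, F_le_H φ φbar hbar hg⟩, ?_, rfl⟩
      rw [MonoidHom.mem_ker]
      have h1 : dHom φ φbar hbar ⟨g, F_le_H φ φbar hbar hg⟩ = 1 := by
        apply Subtype.ext
        show g⁻¹ * φ g = 1
        rw [show φ g = g from hg]
        group
      show (QuotientGroup.mk' (nu φ).range) (dHom φ φbar hbar ⟨g, F_le_H φ φbar hbar hg⟩) = 1
      rw [h1, map_one]
    · intro z hz
      refine Subgroup.mem_map.mpr ⟨⟨z, Z_le_H φ φbar hbar hz⟩, ?_, rfl⟩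
      rw [MonoidHom.mem_ker]
      show (QuotientGroup.mk' (nu φ).range) (dHom φ φbar hbar ⟨z, Z_le_H φ φbar hbar hz⟩) = 1
      rw [QuotientGroup.mk'_apply, QuotientGroup.eq_one_iff]
      exact ⟨⟨z, hz⟩, rfl⟩

end Main

lemma fg_of_mulEquiv {A B : Type*} [Group A] [Group B] (e : A ≃* B) (h : Group.FG A) :
    Group.FG B := @Group.fg_of_surjective A _ B _ h e.toMonoidHom e.surjective

/-- (Corollary B with n = 1.) For a finitely generated group `G` with
finitely generated center and an automorphism `φ` of finite order, `Fix φ` is finitely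
generated iff `Fix φ̄` is finitely generated. -/
theorem fixed_fg_iff_fixedBar_fg_of_finite_order {G : Type*} [Group G]
    (hG : Group.FG G) (hZ : Group.FG ↥(Subgroup.center G)) (φ : G ≃* G)
    (m : ℕ) (hm : 1 ≤ m) (hord : ∀ g : G, (⇑φ)^[m] g = g)
    (φbar : (G ⧸ Subgroup.center G) ≃* (G ⧸ Subgroup.center G))
    (hbar : ∀ g : G, φbar (QuotientGroup.mk g) = QuotientGroup.mk (φ g)) :
    Group.FG ↥(fixedSubgroup φ) ↔ Group.FG ↥(fixedSubgroup φbar) := by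
  classical
  set Z := Subgroup.center G with hZdef
  set π := QuotientGroup.mk' Z with hπdef
  set F := fixedSubgroup φ with hFdef
  set Fb := fixedSubgroup φbar with hFbdef
  set S := F.map π with hSdef
  set Hs := Fb.comap π with hHsdef
  have hSle : S ≤ Fb := by
    intro x hx
    rw [hSdef, Subgroup.mem_map] at hx
    obtain ⟨g, hg, rfl⟩ := hx
    show φbar (QuotientGroup.mk g) = QuotientGroup.mk g
    rw [hbar, show φ g = g from hg]
  haveI hQfg : Group.FG (↥Z ⧸ (nu φ).range) :=
    @Group.fg_of_surjective _ _ _ _ hZ _ (QuotientGroup.mk'_surjective _)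
  have htors : Monoid.IsTorsion ↥(eHom φ φbar hbar).range := by
    rintro ⟨x, hx⟩
    rw [MonoidHom.mem_range] at hx
    obtain ⟨g, rfl⟩ := hx
    rw [isOfFinOrder_iff_pow_eq_one]
    refine ⟨m, hm, ?_⟩
    apply Subtype.ext
    simp only [SubmonoidClass.coe_pow, OneMemClass.coe_one]
    show ((QuotientGroup.mk' (nu φ).range) (dHom φ φbar hbar g)) ^ m = 1
    rw [← map_pow, QuotientGroup.mk'_apply, QuotientGroup.eq_one_iff]
    exact claimC φ φbar hbar m hord g
  haveI hrangefg : Group.FG ↥(eHom φ φbar hbar).range := aux_subgroup_fg_of_comm hQfg _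
  haveI hfin : Finite ↥(eHom φ φbar hbar).range := CommGroup.finite_of_fg_torsion _ htors
  have hker_idx : (eHom φ φbar hbar).ker.index ≠ 0 := by
    rw [Subgroup.index_ker]
    exact Nat.pos_iff_ne_zero.mp Nat.card_pos
  have hrel : S.relIndex Fb ≠ 0 := by
    have h1 : Hs.map π = Fb :=
      Subgroup.map_comap_eq_self_of_surjective (QuotientGroup.mk'_surjective _) _
    have h2 : S.comap π = F ⊔ Z := by
      rw [hSdef, Subgroup.comap_map_eq, hπdef, QuotientGroup.ker_mk']
    have h3 := Subgroup.relIndex_comap (H := S) π Hs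
    rw [h1, h2] at h3
    rw [← h3]
    have h4 : (F ⊔ Z).subgroupOf Hs = (eHom φ φbar hbar).ker := by
      rw [← ker_eHom_map φ φbar hbar, Subgroup.subgroupOf,
        Subgroup.comap_map_eq_self_of_injective (Subgroup.subtype_injective _)]
    rw [Subgroup.relIndex, h4]
    exact hker_idx
  -- the intersection F ⊓ Z is finitely generated
  have hZF : Group.FG ↥(Z ⊓ F) := by
    have h5 := aux_subgroup_fg_of_comm hZ ((Z ⊓ F).subgroupOf Z)
    exact fg_of_mulEquiv (Subgroup.subgroupOfEquivOfLe inf_le_left) h5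
  -- E1
  have hFS : Group.FG ↥F ↔ Group.FG ↥S := by
    have h5 : (π.comp F.subtype).range = S := by
      rw [MonoidHom.range_comp, Subgroup.range_subtype]
    constructor
    · intro h
      have h6 := @Group.fg_range _ _ _ _ h (π.comp F.subtype)
      rwa [h5] at h6
    · intro h
      apply aux_fg_of_ker_of_surjective ((π.comp F.subtype).rangeRestrict)
        (MonoidHom.rangeRestrict_surjective _)
      · rw [MonoidHom.ker_rangeRestrict]
        have h7 : (π.comp F.subtype).ker = Z.subgroupOf F := by
          rw [← MonoidHom.comap_ker, hπdef, QuotientGroup.ker_mk']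
          rfl
        rw [h7, ← Subgroup.inf_subgroupOf_right]
        rw [← Group.fg_iff_subgroup_fg]
        exact fg_of_mulEquiv (Subgroup.subgroupOfEquivOfLe inf_le_right).symm hZF
      · rw [h5]
        exact h
  -- E2
  have heq : (S.subgroupOf Fb).map Fb.subtype = S := by
    rw [Subgroup.subgroupOf_map_subtype, inf_eq_left.mpr hSle]
  have hFbS : Group.FG ↥Fb ↔ Group.FG ↥S := by
    constructor
    · intro h
      haveI := h
      haveI : (S.subgroupOf Fb).FiniteIndex := ⟨hrel⟩
      haveI h8 := Subgroup.fg_of_index_ne_zero (S.subgroupOf Fb)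
      have h9 := fg_of_mulEquiv
        (Subgroup.equivMapOfInjective (S.subgroupOf Fb) Fb.subtype
          (Subgroup.subtype_injective _)) h8
      rwa [heq] at h9
    · intro h
      apply aux_fg_of_finiteIndex_subgroup (S.subgroupOf Fb) ?_ hrel
      have h10 := fg_of_mulEquiv
        (Subgroup.equivMapOfInjective (S.subgroupOf Fb) Fb.subtype
          (Subgroup.subtype_injective _)).symm
      rw [heq] at h10
      exact h10 h
  exact hFS.trans hFbS.symm
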